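/- Let I be an ideal of K[[x_1,…,x_n]] generated by F_1,…,F_k, let Λ be a positive linear form, and let l_0 be the maximum of Λ over the vertices of N_Λ(I). If μ ≥ l_0 and G_1,…,G_k satisfy G_i − F_i ∈ n_{Λ,μ+1} for all i (i.e., the G_i agree with the F_i up to Λ-degree μ), then the ideal I_μ = (G_1,…,G_k) satisfies N_Λ(I_μ) ⊇ N_Λ(I). -/

import Mathlib

noncomputable section
open MvPowerSeries

/-- The value of the positive linear form with coefficients `lam` at `β`. -/
def LamVal {n : ℕ} (lam : Fin n → ℕ) (β : Fin n →₀ ℕ) : ℕ := ∑ j, lam j * β j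

/-- The strict total order on `ℕ^n` induced by the positive linear form `lam`:
lexicographic comparison of `(Λ β, β₁, …, βₙ)`. -/
def LamLt {n : ℕ} (lam : Fin n → ℕ) (β γ : Fin n →₀ ℕ) : Prop :=
  LamVal lam β < LamVal lam γ ∨ (LamVal lam β = LamVal lam γ ∧ toLex ⇑β < toLex ⇑γ)

/-- `β` is the initial exponent of `F` w.r.t. the order induced by `lam`. -/
def IsInexp {n : ℕ} {K : Type*} [Field K] (lam : Fin n → ℕ)
    (F : MvPowerSeries (Fin n) K) (β : Fin n →₀ ℕ) : Prop :=
  coeff β F ≠ 0 ∧ ∀ γ, coeff γ F ≠ 0 → ¬ LamLt lam γ β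

/-- The diagram of initial exponents of an ideal. -/
def Diagram {n : ℕ} {K : Type*} [Field K] (lam : Fin n → ℕ)
    (I : Ideal (MvPowerSeries (Fin n) K)) : Set (Fin n →₀ ℕ) :=
  {β | ∃ F ∈ I, F ≠ 0 ∧ IsInexp lam F β}

/-- The ideal `n_{Λ,μ}` generated by the monomials `x^β` with `Λ(β) ≥ μ`. -/
def NIdeal {n : ℕ} (K : Type*) [Field K] (lam : Fin n → ℕ) (μ : ℕ) :
    Ideal (MvPowerSeries (Fin n) K) :=
  Ideal.span {F | ∃ β : Fin n →₀ ℕ, μ ≤ LamVal lam β ∧ F = monomial β (1 : K)}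

/-- The maximal ideal `(x_1, …, x_n)` of `K[[x_1,…,x_n]]`. -/
def MaxId {n : ℕ} (K : Type*) [Field K] : Ideal (MvPowerSeries (Fin n) K) :=
  Ideal.span (Set.range (X : Fin n → MvPowerSeries (Fin n) K))

/-- `V` generates `N` under addition of arbitrary elements of `ℕ^n`. -/
def GeneratesDiag {n : ℕ} (V N : Set (Fin n →₀ ℕ)) : Prop :=
  {x | ∃ v ∈ V, ∃ β, x = v + β} = N

/-- `V` is the set of vertices of the diagram `N`. -/
def IsVertices {n : ℕ} (V : Finset (Fin n →₀ ℕ)) (N : Set (Fin n →₀ ℕ)) : Prop :=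
  ↑V ⊆ N ∧ GeneratesDiag ↑V N ∧
    ∀ W : Finset (Fin n →₀ ℕ), ↑W ⊆ N → GeneratesDiag ↑W N → V ⊆ W

/-- The Hilbert–Samuel function of `K[[x]]/I`. -/
def HSF {n : ℕ} {K : Type*} [Field K] (I : Ideal (MvPowerSeries (Fin n) K)) (η : ℕ) : ℕ :=
  Module.finrank K (MvPowerSeries (Fin n) K ⧸ (I + MaxId K ^ (η + 1)))

end

section AuxStmt9
open MvPowerSeries

lemma lamVal_add' {n : ℕ} (lam : Fin n → ℕ) (a b : Fin n →₀ ℕ) :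
    LamVal lam (a + b) = LamVal lam a + LamVal lam b := by
  simp [LamVal, Finsupp.add_apply, mul_add, Finset.sum_add_distrib]

lemma lamLt_add_left' {n : ℕ} (lam : Fin n → ℕ) (δ ε v : Fin n →₀ ℕ)
    (h : LamLt lam (δ + ε) (δ + v)) : LamLt lam ε v := by
  rcases h with h | ⟨h1, h2⟩
  · left
    rw [lamVal_add', lamVal_add'] at h
    omega
  · right
    constructor
    · rw [lamVal_add', lamVal_add'] at h1; omega
    · rw [Finsupp.coe_add, Finsupp.coe_add] at h2
      obtain ⟨i, g1, g2⟩ := h2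
      exact ⟨i, fun j hj => add_left_cancel (g1 j hj), lt_of_add_lt_add_left g2⟩

lemma nideal_coeff' {n : ℕ} {K : Type*} [Field K] (lam : Fin n → ℕ) (m : ℕ)
    {P : MvPowerSeries (Fin n) K} (hP : P ∈ NIdeal K lam m) :
    ∀ γ, LamVal lam γ < m → coeff γ P = 0 := by
  classical
  let J : Ideal (MvPowerSeries (Fin n) K) :=
    { carrier := {Q | ∀ γ, LamVal lam γ < m → coeff γ Q = 0}
      add_mem' := by
        intro a b ha hb γ hγ
        simp [map_add, ha γ hγ, hb γ hγ]
      zero_mem' := by intro γ hγ; simp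
      smul_mem' := by
        intro r Q hQ γ hγ
        rw [smul_eq_mul, coeff_mul]
        apply Finset.sum_eq_zero
        rintro ⟨p, q⟩ hpq
        rw [Finset.HasAntidiagonal.mem_antidiagonal] at hpq
        have hq : LamVal lam q ≤ LamVal lam γ := by
          rw [← hpq, lamVal_add']; exact Nat.le_add_left _ _
        rw [hQ q (lt_of_le_of_lt hq hγ), mul_zero] }
  have hle : NIdeal K lam m ≤ J := by
    rw [NIdeal, Ideal.span_le]
    rintro f ⟨β, hβ, rfl⟩ γ hγ
    rw [coeff_monomial]
    rw [if_neg]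
    rintro rfl
    omega
  exact hle hP

lemma isInexp_monomial_mul' {n : ℕ} {K : Type*} [Field K] (lam : Fin n → ℕ)
    {H : MvPowerSeries (Fin n) K} {v : Fin n →₀ ℕ} (h : IsInexp lam H v)
    (δ : Fin n →₀ ℕ) : IsInexp lam (monomial δ (1 : K) * H) (δ + v) := by
  constructor
  · rw [coeff_add_monomial_mul, one_mul]
    exact h.1
  · intro γ hγ hlt
    rw [coeff_monomial_mul] at hγ
    by_cases hδγ : δ ≤ γ
    · rw [if_pos hδγ, one_mul] at hγ
      have hγeq : δ + (γ - δ) = γ := add_tsub_cancel_of_le hδγ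
      refine h.2 (γ - δ) hγ ?_
      apply lamLt_add_left' lam δ
      rw [hγeq]
      exact hlt
    · rw [if_neg hδγ] at hγ
      exact hγ rfl

end AuxStmt9

open MvPowerSeries in
/-- If `μ ≥ l₀ = max{Λ(β) : β vertex of N_Λ(I)}` and the generators `G_i` agree
with the `F_i` up to `Λ`-degree `μ` (i.e. `G_i − F_i ∈ n_{Λ,μ+1}`), then
`N_Λ((G_1,…,G_k)) ⊇ N_Λ((F_1,…,F_k))`. -/
theorem stmt9 {n : ℕ} {K : Type*} [Field K] (lam : Fin n → ℕ) (hpos : ∀ j, 0 < lam j)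
    (k : ℕ) (F G : Fin k → MvPowerSeries (Fin n) K)
    (V : Finset (Fin n →₀ ℕ))
    (hV : IsVertices V (Diagram lam (Ideal.span (Set.range F))))
    (μ : ℕ) (hμ : ∀ β ∈ V, LamVal lam β ≤ μ)
    (hFG : ∀ i, G i - F i ∈ NIdeal K lam (μ + 1)) :
    Diagram lam (Ideal.span (Set.range F)) ⊆ Diagram lam (Ideal.span (Set.range G)) := by
  rintro β hβ
  obtain ⟨hVsub, hgen, -⟩ := hV
  rw [← hgen] at hβ
  obtain ⟨v, hvV, δ, rfl⟩ := hβ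
  obtain ⟨H, hHI, hH0, hHc, hHmin⟩ := hVsub hvV
  rw [Ideal.span, Submodule.mem_span_range_iff_exists_fun] at hHI
  obtain ⟨c, hc⟩ := hHI
  set H' : MvPowerSeries (Fin n) K := ∑ i, c i • G i with hH'def
  have hH'mem : H' ∈ Ideal.span (Set.range G) := by
    apply Submodule.sum_mem
    intro i _
    exact Ideal.mul_mem_left _ _ (Ideal.subset_span ⟨i, rfl⟩)
  have hdiff : H' - H ∈ NIdeal K lam (μ + 1) := by
    rw [← hc, hH'def, ← Finset.sum_sub_distrib]
    apply Submodule.sum_mem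
    intro i _
    rw [← smul_sub]
    exact Submodule.smul_mem _ _ (hFG i)
  have hagree : ∀ γ : Fin n →₀ ℕ, LamVal lam γ ≤ μ → coeff γ H' = coeff γ H := by
    intro γ hγ
    have := nideal_coeff' lam (μ + 1) hdiff γ (by omega)
    rw [map_sub] at this
    exact sub_eq_zero.mp this
  have hvμ : LamVal lam v ≤ μ := hμ v hvV
  have hH'v : IsInexp lam H' v := by
    constructor
    · rw [hagree v hvμ]; exact hHc
    · intro γ hγ hlt
      have hγμ : LamVal lam γ ≤ μ := by
        rcases hlt with h | ⟨h, -⟩ <;> omega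
      rw [hagree γ hγμ] at hγ
      exact hHmin γ hγ hlt
  refine ⟨monomial δ (1 : K) * H', Ideal.mul_mem_left _ _ hH'mem, ?_, ?_⟩
  · intro h0
    have := (isInexp_monomial_mul' lam hH'v δ).1
    rw [h0, map_zero] at this
    exact this rfl
  · rw [add_comm v δ]
    exact isInexp_monomial_mul' lam hH'v δ
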